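/- arXiv:2110.01138 — 2 statements merged into one kernel-verified Lean document; each statement's English description precedes it below -/
import Mathlib

section
/- Let X be a T₀ topological space and E ⊆ X. The following are equivalent: (1) E is b-closed in X; (2) there exist a set M and continuous maps f, g : X → (Σ2)^M such that E = {x ∈ X : f(x) = g(x)}; (3) there exist a T₀ space Y and continuous maps f, g : X → Y such that E = {x ∈ X : f(x) = g(x)}. -/
open TopologicalSpace

/-- The b-topology associated with a topological space `(X, t)`: the topology with base
`{U ∩ cl({x}) : x ∈ U, U open}`. -/
def bTop (X : Type) (t : TopologicalSpace X) : TopologicalSpace X :=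
  TopologicalSpace.generateFrom
    {s | ∃ (U : Set X) (x : X), @IsOpen X t U ∧ x ∈ U ∧ s = U ∩ @closure X t {x}}

/-- The specialization order of `(X, t)`: `x ≤ y` iff `x ∈ cl({y})`. -/
def specLE {X : Type} (t : TopologicalSpace X) (x y : X) : Prop :=
  x ∈ @closure X t {y}

/-- The subspace topology on a subset. -/
def subTop {X : Type} (t : TopologicalSpace X) (A : Set X) : TopologicalSpace A :=
  TopologicalSpace.induced Subtype.val t

/-- A class of topological spaces, viewed as the object class of a full subcategory of Top. -/
abbrev SpaceClass : Type 1 := (X : Type) → TopologicalSpace X → Prop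

/-- All members of `K` are T₀ (i.e. `K` is a subcategory of `Top₀`). -/
def AllT0 (K : SpaceClass) : Prop := ∀ X t, K X t → @T0Space X t

/-- `K` is closed under homeomorphisms. -/
def ClosedUnderHomeo (K : SpaceClass) : Prop :=
  ∀ (X Y : Type) (tX : TopologicalSpace X) (tY : TopologicalSpace Y),
    K X tX → Nonempty (@Homeomorph X Y tX tY) → K Y tY

/-- `K ⊄ Top₁`: `K` contains a space that is not T₁. -/
def NotSubT1 (K : SpaceClass) : Prop := ∃ X t, K X t ∧ ¬ @T1Space X t

/-- `μ : X → Xk` is a K-reflection for `X`: `Xk ∈ K`, `μ` is continuous and every continuous map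
from `X` to a member of `K` factors uniquely (continuously) through `μ`. -/
def IsReflection (K : SpaceClass) {X Xk : Type} (tX : TopologicalSpace X)
    (tk : TopologicalSpace Xk) (μ : X → Xk) : Prop :=
  K Xk tk ∧ @Continuous X Xk tX tk μ ∧
    ∀ (Z : Type) (tZ : TopologicalSpace Z), K Z tZ →
      ∀ f : X → Z, @Continuous X Z tX tZ f →
        ∃! g : Xk → Z, @Continuous Xk Z tk tZ g ∧ g ∘ μ = f

/-- `K` is reflective in `Top₀`: every T₀ space admits a K-reflection. -/
def IsReflective (K : SpaceClass) : Prop :=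
  ∀ (X : Type) (tX : TopologicalSpace X), @T0Space X tX →
    ∃ (Xk : Type) (tk : TopologicalSpace Xk) (μ : X → Xk), IsReflection K tX tk μ

/-- `K` is b-closed-hereditary. -/
def BClosedHereditary (K : SpaceClass) : Prop :=
  ∀ (X : Type) (tX : TopologicalSpace X) (A : Set X),
    K X tX → @IsClosed X (bTop X tX) A → K A (subTop tX A)

/-- `K` is productive. -/
def Productive (K : SpaceClass) : Prop :=
  ∀ (I : Type) (X : I → Type) (t : ∀ i, TopologicalSpace (X i)),
    (∀ i, K (X i) (t i)) → K (∀ i, X i) (@Pi.topologicalSpace I X t)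

/-- `K` has equalizers. -/
def HasEqualizers (K : SpaceClass) : Prop :=
  ∀ (X Y : Type) (tX : TopologicalSpace X) (tY : TopologicalSpace Y),
    K X tX → K Y tY → ∀ f g : X → Y, @Continuous X Y tX tY f → @Continuous X Y tX tY g →
      K {x | f x = g x} (subTop tX {x | f x = g x})

/-- `(X, t)` is sober: T₀ and every irreducible closed set is the closure of a point. -/
def Sober (X : Type) (t : TopologicalSpace X) : Prop := @T0Space X t ∧ @QuasiSober X t


section Aux

open Set

variable {X : Type} [tX : TopologicalSpace X]

/-- The defining family of `bTop` is a topological basis for `bTop`. -/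
lemma bTop_isBasis :
    @TopologicalSpace.IsTopologicalBasis X (bTop X tX)
      {s | ∃ (U : Set X) (x : X), IsOpen U ∧ x ∈ U ∧ s = U ∩ closure {x}} := by
  refine @TopologicalSpace.IsTopologicalBasis.mk X (bTop X tX) _ ?_ ?_ rfl
  · rintro t₁ ⟨U₁, x₁, hU₁, hx₁, rfl⟩ t₂ ⟨U₂, x₂, hU₂, hx₂, rfl⟩ x ⟨⟨hxU₁, hxc₁⟩, ⟨hxU₂, hxc₂⟩⟩
    refine ⟨(U₁ ∩ U₂) ∩ closure {x}, ⟨U₁ ∩ U₂, x, hU₁.inter hU₂, ⟨hxU₁, hxU₂⟩, rfl⟩,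
      ⟨⟨hxU₁, hxU₂⟩, subset_closure rfl⟩, ?_⟩
    have hc₁ : closure {x} ⊆ closure {x₁} :=
      closure_minimal (Set.singleton_subset_iff.2 hxc₁) isClosed_closure
    have hc₂ : closure {x} ⊆ closure {x₂} :=
      closure_minimal (Set.singleton_subset_iff.2 hxc₂) isClosed_closure
    rintro y ⟨⟨hy₁, hy₂⟩, hyc⟩
    exact ⟨⟨hy₁, hc₁ hyc⟩, ⟨hy₂, hc₂ hyc⟩⟩
  · apply Set.eq_univ_of_forall
    intro x
    exact ⟨Set.univ ∩ closure {x}, ⟨Set.univ, x, isOpen_univ, trivial, rfl⟩,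
      ⟨trivial, subset_closure rfl⟩⟩

/-- One half of the hard direction: an equalizer of continuous maps into a T₀ space is
b-closed. -/
lemma equalizer_bClosed {Y : Type} [tY : TopologicalSpace Y] [T0Space Y]
    {f g : X → Y} (hf : Continuous f) (hg : Continuous g) :
    @IsClosed X (bTop X tX) {x | f x = g x} := by
  set E : Set X := {x | f x = g x} with hE
  -- key: around each point of `Eᶜ` there is a basic b-open set disjoint from `E`
  have helper : ∀ (a b : X → Y), Continuous a → Continuous b →
      ∀ (p : X) (V : Set Y), IsOpen V → a p ∈ V → b p ∉ V →
        ∀ y ∈ a ⁻¹' V ∩ closure {p}, a y ≠ b y := by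
    intro a b ha hb p V hV haV hbV y ⟨hyV, hyc⟩ heq
    have h1 : b y ∈ closure {b p} := by
      have := (image_closure_subset_closure_image hb (s := {p}))
        ⟨y, hyc, rfl⟩
      simpa using this
    have h2 : b y ∈ V := by rw [← heq]; exact hyV
    rcases mem_closure_iff.1 h1 V hV h2 with ⟨z, hzV, hz⟩
    rw [Set.mem_singleton_iff] at hz
    exact hbV (hz ▸ hzV)
  have key : ∀ p ∉ E, ∃ (U : Set X) (x : X), IsOpen U ∧ x ∈ U ∧
      p ∈ U ∩ closure {x} ∧ U ∩ closure {x} ⊆ Eᶜ := by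
    intro p hp
    have hne : f p ≠ g p := hp
    rcases exists_isOpen_xor'_mem hne with ⟨V, hV, hxor⟩
    rcases hxor with ⟨hfV, hgV⟩ | ⟨hgV, hfV⟩
    · refine ⟨f ⁻¹' V, p, hV.preimage hf, hfV, ⟨hfV, subset_closure rfl⟩, ?_⟩
      intro y hy hyE
      exact helper f g hf hg p V hV hfV hgV y hy hyE
    · refine ⟨g ⁻¹' V, p, hV.preimage hg, hgV, ⟨hgV, subset_closure rfl⟩, ?_⟩
      intro y hy hyE
      exact helper g f hg hf p V hV hgV hfV y hy (Eq.symm hyE)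
  refine @IsClosed.mk X (bTop X tX) E ?_
  choose U x hUo hxU hpmem hsub using key
  have hEc : Eᶜ = ⋃ p : ↥Eᶜ, (U p p.2 ∩ closure {x p p.2}) := by
    apply Set.Subset.antisymm
    · intro p hp
      exact Set.mem_iUnion.2 ⟨⟨p, hp⟩, hpmem p hp⟩
    · intro y hy
      rcases Set.mem_iUnion.1 hy with ⟨p, hyp⟩
      exact hsub p p.2 hyp
  rw [hEc]
  apply @isOpen_iUnion X _ (bTop X tX)
  intro p
  exact TopologicalSpace.isOpen_generateFrom_of_mem
    ⟨U p p.2, x p p.2, hUo p p.2, hxU p p.2, rfl⟩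

/-- The other half: a b-closed set is an equalizer of continuous maps into a power of
Sierpiński space. -/
lemma bClosed_equalizer {E : Set X} (hE : @IsClosed X (bTop X tX) E) :
    ∃ (M : Type) (f g : X → (M → Prop)),
      Continuous f ∧ Continuous g ∧ E = {x | f x = g x} := by
  have hEc : @IsOpen X (bTop X tX) Eᶜ := hE.isOpen_compl
  have key : ∀ p : {p : X // p ∉ E}, ∃ (U : Set X) (x : X), IsOpen U ∧ x ∈ U ∧
      (p : X) ∈ U ∩ closure {x} ∧ U ∩ closure {x} ⊆ Eᶜ := by
    rintro ⟨p, hp⟩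
    rcases @TopologicalSpace.IsTopologicalBasis.exists_subset_of_mem_open X (bTop X tX) _
        bTop_isBasis p Eᶜ hp hEc with
      ⟨s, ⟨U, x, hUo, hxU, rfl⟩, hps, hsub⟩
    exact ⟨U, x, hUo, hxU, hps, hsub⟩
  choose U x hUo hxU hpmem hsub using key
  refine ⟨{p : X // p ∉ E}, fun y p => y ∈ U p, fun y p => y ∈ U p \ closure {x p},
    ?_, ?_, ?_⟩
  · exact continuous_pi fun p => continuous_Prop.2 (hUo p)
  · exact continuous_pi fun p => continuous_Prop.2 ((hUo p).sdiff isClosed_closure)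
  · ext y
    simp only [Set.mem_setOf_eq]
    constructor
    · intro hy
      funext p
      apply propext
      constructor
      · intro hyU
        refine ⟨hyU, fun hyc => ?_⟩
        exact hsub p ⟨hyU, hyc⟩ hy
      · exact fun h => h.1
    · intro h
      by_contra hy
      have := congrFun h ⟨y, hy⟩
      have h1 : y ∈ U ⟨y, hy⟩ := (hpmem ⟨y, hy⟩).1
      have h2 : y ∈ closure {x ⟨y, hy⟩} := (hpmem ⟨y, hy⟩).2
      have : (y ∈ U ⟨y, hy⟩) = (y ∈ U ⟨y, hy⟩ \ closure {x ⟨y, hy⟩}) := this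
      rw [eq_iff_iff] at this
      exact (this.1 h1).2 h2

end Aux

/-- for `E ⊆ X` with `X` T₀, the following are equivalent: (1) `E` is b-closed;
(2) `E` is the equalizer of two continuous maps into a power of the Sierpiński space;
(3) `E` is the equalizer of two continuous maps into a T₀ space. -/
theorem statement9 {X : Type} [tX : TopologicalSpace X] [T0Space X] (E : Set X) :
    (@IsClosed X (bTop X tX) E ↔
      ∃ (M : Type) (f g : X → (M → Prop)),
        Continuous f ∧ Continuous g ∧ E = {x | f x = g x})
    ∧ (@IsClosed X (bTop X tX) E ↔
      ∃ (Y : Type) (tY : TopologicalSpace Y), @T0Space Y tY ∧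
        ∃ f g : X → Y, @Continuous X Y tX tY f ∧ @Continuous X Y tX tY g ∧
          E = {x | f x = g x}) := by
  have h12 : @IsClosed X (bTop X tX) E →
      ∃ (M : Type) (f g : X → (M → Prop)),
        Continuous f ∧ Continuous g ∧ E = {x | f x = g x} := bClosed_equalizer
  have h23 : (∃ (M : Type) (f g : X → (M → Prop)),
        Continuous f ∧ Continuous g ∧ E = {x | f x = g x}) →
      ∃ (Y : Type) (tY : TopologicalSpace Y), @T0Space Y tY ∧
        ∃ f g : X → Y, @Continuous X Y tX tY f ∧ @Continuous X Y tX tY g ∧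
          E = {x | f x = g x} := by
    rintro ⟨M, f, g, hf, hg, hfg⟩
    exact ⟨M → Prop, inferInstance, inferInstance, f, g, hf, hg, hfg⟩
  have h31 : (∃ (Y : Type) (tY : TopologicalSpace Y), @T0Space Y tY ∧
        ∃ f g : X → Y, @Continuous X Y tX tY f ∧ @Continuous X Y tX tY g ∧
          E = {x | f x = g x}) → @IsClosed X (bTop X tX) E := by
    rintro ⟨Y, tY, hT0, f, g, hf, hg, rfl⟩
    exact equalizer_bClosed hf hg
  exact ⟨⟨h12, fun h => h31 (h23 h)⟩, ⟨fun h => h23 (h12 h), h31⟩⟩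
end

section
/- Let K be a reflective full subcategory of Top₀ closed under homeomorphisms such that K ⊄ Top₁. If {X_i : i ∈ I} is a family of subsets of a sober space Z such that each subspace X_i belongs to K, then the subspace ⋂_{i∈I} X_i of Z belongs to K. -/
open TopologicalSpace

-- retract lemma
lemma mem_of_retract (K : SpaceClass) (hHomeo : ClosedUnderHomeo K)
    {X Xk : Type} {tX : TopologicalSpace X} {tk : TopologicalSpace Xk} {μ : X → Xk}
    (hrefl : IsReflection K tX tk μ) (r : Xk → X) (hr : @Continuous _ _ tk tX r)
    (hrμ : r ∘ μ = id) : K X tX := by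
  obtain ⟨hK, hμ, hump⟩ := hrefl
  obtain ⟨g, -, hgu⟩ := hump Xk tk hK μ hμ
  have e1 : μ ∘ r = g := hgu (μ ∘ r) ⟨hμ.comp hr, by
    rw [Function.comp_assoc, hrμ]; rfl⟩
  have e2 : id = g := hgu id ⟨continuous_id, by simp⟩
  have h1 : μ ∘ r = id := e1.trans e2.symm
  exact hHomeo Xk X tk tX hK ⟨{
    toFun := r, invFun := μ,
    left_inv := fun q => congrFun h1 q,
    right_inv := fun x => congrFun hrμ x,
    continuous_toFun := hr, continuous_invFun := hμ }⟩

-- opens of Prop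
lemma isOpen_prop {s : Set Prop} (h : (False : Prop) ∈ s → (True : Prop) ∈ s) : IsOpen s := by
  by_cases hT : (True : Prop) ∈ s
  · by_cases hF : (False : Prop) ∈ s
    · have : s = Set.univ := by
        ext p
        simp only [Set.mem_univ, iff_true]
        by_cases hp : p
        · rwa [eq_true hp]
        · rwa [eq_false hp]
      rw [this]; exact isOpen_univ
    · have : s = {True} := by
        ext p
        constructor
        · intro hp
          by_cases hpp : p
          · rw [eq_true hpp]; rfl
          · rw [eq_false hpp] at hp; exact absurd hp hF
        · intro hp; rw [Set.mem_singleton_iff] at hp; rwa [hp]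
      rw [this]; exact isOpen_singleton_true
  · have : s = ∅ := by
      ext p
      simp only [Set.mem_empty_iff_false, iff_false]
      intro hp
      by_cases hpp : p
      · rw [eq_true hpp] at hp; exact hT hp
      · rw [eq_false hpp] at hp; exact hT (h hp)
    rw [this]; exact isOpen_empty

instance : T0Space Prop := by
  constructor
  intro p q h
  have := h.mem_open_iff isOpen_singleton_true
  simp only [Set.mem_singleton_iff] at this
  by_cases hp : p <;> by_cases hq : q
  · rw [eq_true hp, eq_true hq]
  · exact absurd (this.mp (eq_true hp)) (by simp [eq_false hq])
  · exact absurd (this.mpr (eq_true hq)) (by simp [eq_false hp])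
  · rw [eq_false hp, eq_false hq]

lemma sier_mem (K : SpaceClass) (hT0 : AllT0 K) (hHomeo : ClosedUnderHomeo K)
    (hRefl : IsReflective K) (hNotT1 : NotSubT1 K) : K Prop sierpinskiSpace := by
  classical
  obtain ⟨X, t, hKX, hnt1⟩ := hNotT1
  letI := t
  haveI : T0Space X := hT0 X t hKX
  -- get b (open point) and a ∈ closure {b}, a ≠ b
  have : ∃ b a : X, b ≠ a ∧ a ∈ closure ({b} : Set X) := by
    by_contra h
    push_neg at h
    exact hnt1 (t1Space_iff_specializes_imp_eq.mpr fun x y hxy => by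
      by_contra hne
      exact (h x y hne) (specializes_iff_mem_closure.mp hxy))
  obtain ⟨b, a, hab, hacl⟩ := this
  -- separating open set: b ∈ U, a ∉ U
  have : ∃ U : Set X, IsOpen U ∧ b ∈ U ∧ a ∉ U := by
    have hni : ¬Inseparable a b := fun h => hab (h.eq).symm
    rw [inseparable_iff_forall_isOpen] at hni
    push_neg at hni
    obtain ⟨U, hU, hmem⟩ := hni
    rcases hmem with ⟨haU, hbU⟩ | ⟨haU, hbU⟩
    · exfalso
      apply hbU
      rcases mem_closure_iff.mp hacl U hU haU with ⟨x, hxU, hxb⟩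
      rwa [Set.mem_singleton_iff.mp hxb] at hxU
    · exact ⟨U, hU, hbU, haU⟩
  obtain ⟨U, hU, hbU, haU⟩ := this
  -- the map Prop → X
  set f : Prop → X := fun p => if p then b else a with hf
  have hfc : Continuous f := by
    rw [continuous_def]
    intro V hV
    apply isOpen_prop
    intro hFa
    have haV : a ∈ V := by simpa [hf] using hFa
    have hbV : b ∈ V := by
      rcases mem_closure_iff.mp hacl V hV haV with ⟨x, hxV, hxb⟩
      rwa [Set.mem_singleton_iff.mp hxb] at hxV
    simpa [hf] using hbV
  obtain ⟨Sk, tk, μ, hrefl⟩ := hRefl Prop sierpinskiSpace inferInstance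
  obtain ⟨hKSk, hμ, hump⟩ := id hrefl
  obtain ⟨g, ⟨hgc, hgμ⟩, -⟩ := hump X t hKX f hfc
  set r : Sk → Prop := fun q => g q ∈ U with hr
  have hrc : @Continuous Sk Prop tk sierpinskiSpace r := by
    rw [continuous_Prop]
    exact hU.preimage hgc
  have hrμ : r ∘ μ = id := by
    funext p
    have hgp : g (μ p) = f p := congrFun hgμ p
    show (g (μ p) ∈ U) = p
    rw [hgp]
    apply propext
    constructor
    · intro h
      by_contra hp
      rw [hf] at h; simp only [if_neg hp] at h
      exact haU h
    · intro hp
      rw [hf]; simpa [if_pos hp] using hbU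
  exact mem_of_retract K hHomeo hrefl r hrc hrμ

lemma productive_of_reflective (K : SpaceClass) (hT0 : AllT0 K) (hHomeo : ClosedUnderHomeo K)
    (hRefl : IsReflective K) : Productive K := by
  intro I X t hKi
  letI : ∀ i, TopologicalSpace (X i) := t
  haveI : ∀ i, T0Space (X i) := fun i => hT0 _ _ (hKi i)
  haveI hP0 : T0Space (∀ i, X i) := inferInstance
  obtain ⟨Pk, tk, μ, hrefl⟩ := hRefl (∀ i, X i) _ hP0
  obtain ⟨hKPk, hμ, hump⟩ := id hrefl
  have h := fun i => (hump (X i) (t i) (hKi i) (fun p => p i) (continuous_apply i)).exists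
  choose g hg using h
  refine mem_of_retract K hHomeo hrefl (fun q i => g i q) ?_ ?_
  · exact continuous_pi fun i => (hg i).1
  · funext p
    funext i
    exact congrFun (hg i).2 p

lemma equalizers_of_reflective (K : SpaceClass) (hT0 : AllT0 K) (hHomeo : ClosedUnderHomeo K)
    (hRefl : IsReflective K) : HasEqualizers K := by
  intro X Y tX tY hKX hKY f g hf hg
  letI := tX; letI := tY
  haveI : T0Space X := hT0 _ _ hKX
  haveI hE0 : T0Space {x | f x = g x} := Subtype.t0Space
  obtain ⟨Ek, tk, μ, hrefl⟩ := hRefl {x | f x = g x} (subTop tX {x | f x = g x}) hE0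
  obtain ⟨hKEk, hμ, hump⟩ := id hrefl
  obtain ⟨h, ⟨hhc, hhι⟩, -⟩ := hump X tX hKX Subtype.val continuous_subtype_val
  have key : f ∘ h = g ∘ h := by
    obtain ⟨w, -, hwu⟩ := hump Y tY hKY (f ∘ Subtype.val) (hf.comp continuous_subtype_val)
    have e1 : f ∘ h = w := hwu (f ∘ h) ⟨hf.comp hhc, by rw [Function.comp_assoc, hhι]⟩
    have e2 : g ∘ h = w := hwu (g ∘ h) ⟨hg.comp hhc, by
      rw [Function.comp_assoc, hhι]
      funext x
      exact x.2.symm⟩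
    rw [e1, e2]
  refine mem_of_retract K hHomeo hrefl (fun q => ⟨h q, congrFun key q⟩) ?_ ?_
  · exact Continuous.subtype_mk hhc _
  · funext e
    exact Subtype.ext (congrFun hhι e)

lemma sober_mem (K : SpaceClass) (hT0 : AllT0 K) (hHomeo : ClosedUnderHomeo K)
    (hRefl : IsReflective K) (hNotT1 : NotSubT1 K)
    (Z : Type) (tZ : TopologicalSpace Z) (hZ : Sober Z tZ) : K Z tZ := by
  classical
  letI := tZ
  haveI hT0Z : T0Space Z := hZ.1
  haveI : QuasiSober Z := hZ.2
  have hS : K Prop sierpinskiSpace := sier_mem K hT0 hHomeo hRefl hNotT1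
  obtain ⟨Zk, tk, μ, hrefl⟩ := hRefl Z tZ hZ.1
  obtain ⟨hKZk, hμ, hump⟩ := id hrefl
  letI := tk
  -- lifting opens along μ
  have lift : ∀ U : Set Z, IsOpen U → ∃ V : Set Zk, IsOpen V ∧ μ ⁻¹' V = U := by
    intro U hU
    obtain ⟨g, ⟨hgc, hgμ⟩, -⟩ := hump Prop sierpinskiSpace hS (fun z => z ∈ U)
      (continuous_Prop.mpr hU)
    refine ⟨{q | g q}, continuous_Prop.mp hgc, ?_⟩
    ext z
    have : g (μ z) = (z ∈ U) := congrFun hgμ z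
    simp only [Set.mem_preimage, Set.mem_setOf_eq, this]
  -- uniqueness of lifts
  have inj : ∀ V V' : Set Zk, IsOpen V → IsOpen V' → μ ⁻¹' V = μ ⁻¹' V' → V = V' := by
    intro V V' hV hV' hpre
    obtain ⟨w, -, hwu⟩ := hump Prop sierpinskiSpace hS (fun z => μ z ∈ V)
      (continuous_Prop.mpr (hV.preimage hμ))
    have e1 : (fun q => q ∈ V) = w := hwu _ ⟨continuous_Prop.mpr hV, rfl⟩
    have e2 : (fun q => q ∈ V') = w := hwu _ ⟨continuous_Prop.mpr hV', by
      funext z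
      refine propext ⟨fun h => ?_, fun h => ?_⟩
      · have hz : z ∈ μ ⁻¹' V' := h
        rw [← hpre] at hz
        exact hz
      · have hz : z ∈ μ ⁻¹' V := h
        rw [hpre] at hz
        exact hz⟩
    ext q
    exact iff_of_eq (congrFun (e1.trans e2.symm) q)
  -- the closed sets C q
  set C : Zk → Set Z := fun q => μ ⁻¹' (closure {q}) with hC
  have hCclosed : ∀ q, IsClosed (C q) := fun q => isClosed_closure.preimage hμ
  have meets : ∀ (q : Zk) (V : Set Zk), IsOpen V → q ∈ V →
      ∃ z, μ z ∈ V ∧ μ z ∈ closure {q} := by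
    intro q V hV hq
    by_contra h
    push_neg at h
    have hpre : μ ⁻¹' V = μ ⁻¹' (V ∩ (closure {q})ᶜ) := by
      ext z
      simp only [Set.mem_preimage, Set.mem_inter_iff, Set.mem_compl_iff]
      exact ⟨fun hz => ⟨hz, h z hz⟩, fun hz => hz.1⟩
    have := inj V (V ∩ (closure {q})ᶜ) hV (hV.inter isClosed_closure.isOpen_compl) hpre
    have hqmem : q ∈ V ∩ (closure {q})ᶜ := this ▸ hq
    exact hqmem.2 (subset_closure rfl)
  have hirr : ∀ q, IsIrreducible (C q) := by
    intro q
    constructor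
    · obtain ⟨z, -, hz⟩ := meets q Set.univ isOpen_univ trivial
      exact ⟨z, hz⟩
    · intro U₁ U₂ h₁ h₂ ⟨z₁, hz₁C, hz₁⟩ ⟨z₂, hz₂C, hz₂⟩
      obtain ⟨V₁, hV₁, hp₁⟩ := lift U₁ h₁
      obtain ⟨V₂, hV₂, hp₂⟩ := lift U₂ h₂
      have hq₁ : q ∈ V₁ := by
        have hzV : μ z₁ ∈ V₁ := by rw [← Set.mem_preimage, hp₁]; exact hz₁
        rcases mem_closure_iff.mp hz₁C V₁ hV₁ hzV with ⟨x, hxV, hxq⟩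
        rwa [← Set.mem_singleton_iff.mp hxq]
      have hq₂ : q ∈ V₂ := by
        have hzV : μ z₂ ∈ V₂ := by rw [← Set.mem_preimage, hp₂]; exact hz₂
        rcases mem_closure_iff.mp hz₂C V₂ hV₂ hzV with ⟨x, hxV, hxq⟩
        rwa [← Set.mem_singleton_iff.mp hxq]
      obtain ⟨z, hzV, hzcl⟩ := meets q (V₁ ∩ V₂) (hV₁.inter hV₂) ⟨hq₁, hq₂⟩
      refine ⟨z, hzcl, ?_, ?_⟩
      · rw [← hp₁]; exact hzV.1
      · rw [← hp₂]; exact hzV.2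
  -- the retraction
  have hgen : ∀ q, ∃ x, closure ({x} : Set Z) = C q := fun q =>
    QuasiSober.sober (hirr q) (hCclosed q)
  set r : Zk → Z := fun q => (hgen q).choose with hrdef
  have hrC : ∀ q, closure ({r q} : Set Z) = C q := fun q => (hgen q).choose_spec
  have hrc : @Continuous Zk Z tk tZ r := by
    rw [continuous_def]
    intro U hU
    obtain ⟨V, hV, hpre⟩ := lift U hU
    have : r ⁻¹' U = V := by
      ext q
      simp only [Set.mem_preimage]
      constructor
      · intro hrU
        have hrCq : μ (r q) ∈ closure {q} := by
          have : r q ∈ C q := (hrC q) ▸ subset_closure rfl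
          exact this
        have hrV : μ (r q) ∈ V := by rw [← Set.mem_preimage, hpre]; exact hrU
        rcases mem_closure_iff.mp hrCq V hV hrV with ⟨x, hxV, hxq⟩
        rwa [← Set.mem_singleton_iff.mp hxq]
      · intro hqV
        obtain ⟨z, hzV, hzcl⟩ := meets q V hV hqV
        have hzC : z ∈ C q := hzcl
        have hzU : z ∈ U := by rw [← hpre]; exact hzV
        have hzclr : z ∈ closure ({r q} : Set Z) := (hrC q).symm ▸ hzC
        rcases mem_closure_iff.mp hzclr U hU hzU with ⟨x, hxU, hxr⟩
        rwa [← Set.mem_singleton_iff.mp hxr]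
    rw [this]; exact hV
  have hrμ : r ∘ μ = id := by
    funext z
    have h1 : C (μ z) = closure ({z} : Set Z) := by
      ext w
      constructor
      · intro hw
        have hw' : μ w ∈ closure ({μ z} : Set Zk) := hw
        rw [mem_closure_iff]
        intro U hU hwU
        obtain ⟨V, hV, hpre⟩ := lift U hU
        have hμwV : μ w ∈ V := by rw [← Set.mem_preimage, hpre]; exact hwU
        rcases mem_closure_iff.mp hw' V hV hμwV with ⟨x, hxV, hxz⟩
        have : μ z ∈ V := by rwa [← Set.mem_singleton_iff.mp hxz]
        exact ⟨z, by rw [← Set.mem_preimage, hpre] at this; exact this, rfl⟩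
      · intro hw
        show μ w ∈ closure ({μ z} : Set Zk)
        rw [mem_closure_iff]
        intro W hW hμwW
        have hwpre : w ∈ μ ⁻¹' W := hμwW
        rcases mem_closure_iff.mp hw (μ ⁻¹' W) (hW.preimage hμ) hwpre with ⟨x, hxW, hxz⟩
        exact ⟨μ z, by rw [← Set.mem_singleton_iff.mp hxz]; exact hxW, rfl⟩
    have h2 : closure ({r (μ z)} : Set Z) = closure ({z} : Set Z) := (hrC (μ z)).trans h1
    exact (inseparable_iff_closure_eq.mpr h2).eq
  exact mem_of_retract K hHomeo hrefl r hrc hrμ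


/-- if `K` is a reflective full subcategory of Top₀ closed under homeomorphisms
containing a non-T₁ space and `{Xᵢ : i ∈ I}` is a family of subsets of a sober space `Z` all of
whose subspaces lie in `K`, then the subspace `⋂ᵢ Xᵢ` lies in `K`. -/
theorem statement12 (K : SpaceClass) (hT0 : AllT0 K) (hHomeo : ClosedUnderHomeo K)
    (hRefl : IsReflective K) (hNotT1 : NotSubT1 K)
    (Z : Type) (tZ : TopologicalSpace Z) (hZ : Sober Z tZ)
    (I : Type) (Xi : I → Set Z) (hXi : ∀ i, K (Xi i) (subTop tZ (Xi i))) :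
    K (⋂ i, Xi i) (subTop tZ (⋂ i, Xi i)) := by
  classical
  letI := tZ
  have hKZ : K Z tZ := sober_mem K hT0 hHomeo hRefl hNotT1 Z tZ hZ
  have hProd := productive_of_reflective K hT0 hHomeo hRefl
  have hEq := equalizers_of_reflective K hT0 hHomeo hRefl
  -- augmented family indexed by Option I (always nonempty)
  set X' : Option I → Set Z := fun j => j.elim Set.univ Xi with hX'
  have hK' : ∀ j, K (X' j) (subTop tZ (X' j)) := by
    intro j
    cases j with
    | none =>
      exact hHomeo Z (X' none) tZ (subTop tZ (X' none)) hKZ ⟨(Homeomorph.Set.univ Z).symm⟩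
    | some i => exact hXi i
  -- the product of the subspaces
  set P : Type := ∀ j, X' j with hP
  letI tP : TopologicalSpace P := Pi.topologicalSpace
  have hKP : K P tP := hProd (Option I) (fun j => X' j) (fun j => subTop tZ (X' j)) hK'
  -- the product Z^(Option I)
  have hKQ : K (Option I → Z) Pi.topologicalSpace :=
    hProd (Option I) (fun _ => Z) (fun _ => tZ) (fun _ => hKZ)
  -- the two maps P → Z^(Option I)
  set F : P → (Option I → Z) := fun p j => (p j).val with hF
  set G : P → (Option I → Z) := fun p j => (p none).val with hG
  have hFc : Continuous F := continuous_pi fun j =>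
    continuous_subtype_val.comp (continuous_apply j)
  have hGc : Continuous G := continuous_pi fun _ =>
    continuous_subtype_val.comp (continuous_apply none)
  -- the equalizer
  have hKE : K {p : P | F p = G p} (subTop tP {p : P | F p = G p}) :=
    hEq P (Option I → Z) tP Pi.topologicalSpace hKP hKQ F G hFc hGc
  -- homeomorphism between the equalizer and the intersection
  set A : Set Z := ⋂ i, Xi i with hA
  have homeo : @Homeomorph {p : P | F p = G p} A
      (subTop tP {p : P | F p = G p}) (subTop tZ A) := by
    refine {
      toFun := fun e => ⟨(e.val none).val, ?_⟩,
      invFun := fun a => ⟨fun j => ⟨a.val, ?_⟩, ?_⟩,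
      left_inv := ?_, right_inv := ?_,
      continuous_toFun := ?_, continuous_invFun := ?_ }
    · rw [hA, Set.mem_iInter]
      intro i
      have := congrFun e.2 (some i)
      simp only [hF, hG] at this
      rw [← this]
      exact (e.val (some i)).2
    · cases j with
      | none => exact Set.mem_univ _
      | some i => exact Set.mem_iInter.mp a.2 i
    · funext j
      rfl
    · intro e
      apply Subtype.ext
      funext j
      apply Subtype.ext
      exact (congrFun e.2 j).symm
    · intro a
      apply Subtype.ext
      rfl
    · exact Continuous.subtype_mk
        (continuous_subtype_val.comp ((continuous_apply none).comp continuous_subtype_val)) _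
    · exact Continuous.subtype_mk
        (continuous_pi fun j => Continuous.subtype_mk continuous_subtype_val _) _
  exact hHomeo {p : P | F p = G p} A (subTop tP {p : P | F p = G p}) (subTop tZ A) hKE ⟨homeo⟩
end
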